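/- Assume the Dickson–Hardy–Littlewood conjecture, and let k ≥ 1. Then any good k-tuple (p_1,…,p_k) can be extended to a good (k+1)-tuple (p_1,…,p_k,p_{k+1}) with p_{k+1} > p_k. -/

import Mathlib

/-- A tuple `(h 0, …, h (k-1))` of natural numbers is *prime-producing* if there are
infinitely many `n` such that `n + h i` is prime for all `i`. -/
def PrimeProducing {k : ℕ} (h : Fin k → ℕ) : Prop :=
  {n : ℕ | ∀ i, Nat.Prime (n + h i)}.Infinite

/-- A tuple is *admissible* if for every prime `p` it avoids at least one residue class
mod `p`. -/
def AdmissibleTuple {k : ℕ} (h : Fin k → ℕ) : Prop :=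
  ∀ p : ℕ, p.Prime → ∃ r : ℕ, r < p ∧ ∀ i, h i % p ≠ r

/-- The Dickson–Hardy–Littlewood conjecture: every admissible tuple is prime-producing. -/
def DicksonHardyLittlewood : Prop :=
  ∀ (k : ℕ) (h : Fin k → ℕ), AdmissibleTuple h → PrimeProducing h

/-- A *good* `k`-tuple: a strictly increasing tuple of primes, all greater than `3`,
such that `p i + p j + 1` is prime and `p i` does not divide `p j + 2` for all `i < j`. -/
def GoodTuple {k : ℕ} (p : Fin k → ℕ) : Prop :=
  StrictMono p ∧ (∀ i, Nat.Prime (p i) ∧ 3 < p i) ∧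
    ∀ i j : Fin k, i < j → Nat.Prime (p i + p j + 1) ∧ ¬ (p i ∣ p j + 2)

section Aux

variable {k : ℕ} {p : Fin k → ℕ}

lemma good_five (hp : GoodTuple p) (i : Fin k) : 5 ≤ p i := by
  obtain ⟨hpr, h3⟩ := hp.2.1 i
  have h4 : p i ≠ 4 := by
    rintro h
    rw [h] at hpr
    norm_num at hpr
  omega

lemma good_odd (hp : GoodTuple p) (i : Fin k) : p i % 2 = 1 := by
  obtain ⟨hpr, h3⟩ := hp.2.1 i
  have := Nat.odd_iff.mp (hpr.odd_of_ne_two (by omega))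
  omega

lemma good_mod3 (hp : GoodTuple p) (i : Fin k) : p i % 3 = 1 ∨ p i % 3 = 2 := by
  obtain ⟨hpr, h3⟩ := hp.2.1 i
  have h0 : p i % 3 ≠ 0 := by
    intro h
    have hd : (3 : ℕ) ∣ p i := Nat.dvd_of_mod_eq_zero h
    have := (Nat.prime_dvd_prime_iff_eq Nat.prime_three hpr).mp hd
    omega
  omega

lemma good_sum (hp : GoodTuple p) {i j : Fin k} (h : i ≠ j) :
    Nat.Prime (p i + p j + 1) := by
  rcases lt_or_gt_of_ne h with hlt | hgt
  · exact (hp.2.2 i j hlt).1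
  · have := (hp.2.2 j i hgt).1
    rwa [show p j + p i + 1 = p i + p j + 1 by ring] at this

/-- The key admissibility residue mod a tuple prime. -/
lemma good_avoid (hp : GoodTuple p) (m : Fin k) :
    ∃ r, r < p m ∧ r ≠ 0 ∧ r ≠ 1 ∧ r ≠ 2 ∧ ∀ j, j ≠ m → (p j + 1) % p m ≠ r := by
  have h5 : ∀ i, 5 ≤ p i := good_five hp
  have hpm := h5 m
  by_cases htw : ∃ t, t ≠ m ∧ p m ∣ p t + 2
  case neg =>
    refine ⟨p m - 1, by omega, by omega, by omega, by omega, fun j hj hmod => ?_⟩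
    apply htw
    have hd := Nat.dvd_sub_mod (n := p m) (p j + 1)
    rw [hmod] at hd
    have hle : p m - 1 ≤ p j + 1 := hmod ▸ Nat.mod_le _ _
    refine ⟨j, hj, ?_⟩
    have heq : p j + 2 = ((p j + 1) - (p m - 1)) + p m := by omega
    rw [heq]
    exact dvd_add hd dvd_rfl
  case pos =>
    obtain ⟨t, htm, hdvd⟩ := htw
    have htlt : t < m := by
      rcases lt_trichotomy t m with h | h | h
      · exact h
      · exact absurd h htm
      · exact absurd hdvd (hp.2.2 m t h).2
    have hptm : p t < p m := hp.1 htlt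
    have heq : p t + 2 = p m := by
      obtain ⟨c, hc⟩ := hdvd
      have h5t := h5 t
      rcases Nat.lt_or_ge c 2 with h | h
      · interval_cases c <;> omega
      · have : p m * 2 ≤ p m * c := Nat.mul_le_mul_left _ h
        omega
    have h7 : 7 ≤ p m := by have := h5 t; omega
    have h3m : p m % 3 = 1 := by
      have h1 := good_mod3 hp m
      have h2 := good_mod3 hp t
      omega
    have h3j : ∀ j, j ≠ m → p j % 3 = 2 := by
      intro j hj
      rcases good_mod3 hp j with h1 | h2
      · exfalso
        have hs := good_sum hp hj
        have h3 : (3 : ℕ) ∣ p j + p m + 1 := by omega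
        have heq3 := (Nat.prime_dvd_prime_iff_eq Nat.prime_three hs).mp h3
        have := h5 j
        omega
      · exact h2
    by_cases hc3 : ∃ i, i ≠ m ∧ (p i + 1) % p m = 3
    case neg =>
      exact ⟨3, by omega, by omega, by omega, by omega,
        fun j hj hmod => hc3 ⟨j, hj, hmod⟩⟩
    case pos =>
      obtain ⟨i, him, hi3⟩ := hc3
      refine ⟨p m - 2, by omega, by omega, by omega, by omega, fun j hjm hmod => ?_⟩
      have hij : i ≠ j := by rintro rfl; omega
      have d1 := Nat.dvd_sub_mod (n := p m) (p i + 1)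
      rw [hi3] at d1
      have d2 := Nat.dvd_sub_mod (n := p m) (p j + 1)
      rw [hmod] at d2
      have hle1 : (3 : ℕ) ≤ p i + 1 := by have := h5 i; omega
      have hle2 : p m - 2 ≤ p j + 1 := hmod ▸ Nat.mod_le _ _
      have hd : p m ∣ p i + p j + 1 := by
        have hsum : p i + p j + 1 =
            ((p i + 1) - 3) + ((p j + 1) - (p m - 2)) + p m := by omega
        rw [hsum]
        exact dvd_add (dvd_add d1 d2) dvd_rfl
      have hs := good_sum hp hij
      have heqS := (Nat.prime_dvd_prime_iff_eq (hp.2.1 m).1 hs).mp hd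
      have h3i := h3j i him
      have h3jj := h3j j hjm
      omega

end Aux

/-- Squarefree product of all primes up to `N` distinct from `x`. -/
def auxD (N x : ℕ) : ℕ :=
  ∏ ℓ ∈ (Finset.range (N + 1)).filter (fun ℓ => Nat.Prime ℓ ∧ ℓ ≠ x), ℓ

/-- Element forcing `n ≢ -2 (mod x)`: congruent to `2` mod `x`, to `0` mod every
other prime up to `N`. -/
def auxB (N x : ℕ) : ℕ := 2 * auxD N x ^ (x - 1)

lemma auxD_dvd {N x ℓ : ℕ} (h1 : ℓ.Prime) (h2 : ℓ ≤ N) (h3 : ℓ ≠ x) :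
    ℓ ∣ auxD N x :=
  Finset.dvd_prod_of_mem _ (by
    simp only [Finset.mem_filter, Finset.mem_range]
    exact ⟨by omega, h1, h3⟩)

lemma auxD_not_dvd {N x : ℕ} (hx : x.Prime) : ¬ x ∣ auxD N x := by
  intro hdvd
  obtain ⟨ℓ, hmem, hdd⟩ := (hx.prime.dvd_finset_prod_iff _).mp hdvd
  simp only [Finset.mem_filter, Finset.mem_range] at hmem
  exact hmem.2.2 ((Nat.prime_dvd_prime_iff_eq hx hmem.2.1).mp hdd).symm

lemma auxB_pos {N x : ℕ} : 2 ≤ auxB N x := by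
  have hD : 0 < auxD N x := by
    apply Finset.prod_pos
    intro ℓ hℓ
    simp only [Finset.mem_filter, Finset.mem_range] at hℓ
    exact hℓ.2.1.pos
  have : 0 < auxD N x ^ (x - 1) := pow_pos hD _
  simp only [auxB]
  omega

lemma auxB_mod_self {N x : ℕ} (hx : x.Prime) (h3 : 3 < x) : auxB N x % x = 2 := by
  haveI : Fact x.Prime := ⟨hx⟩
  have hz : ((auxD N x : ZMod x)) ≠ 0 := by
    rw [Ne, ZMod.natCast_eq_zero_iff]
    exact auxD_not_dvd hx
  have hpow : ((auxD N x : ZMod x)) ^ (x - 1) = 1 :=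
    ZMod.pow_card_sub_one_eq_one hz
  have hcast : ((auxB N x : ℕ) : ZMod x) = ((2 : ℕ) : ZMod x) := by
    simp only [auxB]
    push_cast
    rw [hpow, mul_one]
  have hmod := (ZMod.natCast_eq_natCast_iff' _ _ _).mp hcast
  rwa [Nat.mod_eq_of_lt (by omega : 2 < x)] at hmod

lemma auxB_mod_zero {N x ℓ : ℕ} (hx : 5 ≤ x) (h1 : ℓ.Prime) (h2 : ℓ ≤ N)
    (h3 : ℓ ≠ x) : auxB N x % ℓ = 0 := by
  have hd : ℓ ∣ auxB N x := by
    have h4 : ℓ ∣ auxD N x := auxD_dvd h1 h2 h3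
    have h5 : auxD N x ∣ auxD N x ^ (x - 1) :=
      dvd_pow_self _ (by omega : x - 1 ≠ 0)
    exact Dvd.dvd.mul_left (h4.trans h5) 2
  obtain ⟨c, hc⟩ := hd
  rw [hc]
  exact Nat.mul_mod_right ℓ c

/-- The auxiliary tuple: `0`, the `p i + 1`, and the forcing elements `auxB N (p i)`. -/
def auxH {k : ℕ} (p : Fin k → ℕ) (N : ℕ) : Fin (k + k + 1) → ℕ :=
  Fin.cons 0 (Fin.append (fun i => p i + 1) (fun i => auxB N (p i)))

lemma auxH_adm {k : ℕ} {p : Fin k → ℕ} (hp : GoodTuple p) (N : ℕ)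
    (hN1 : ∀ i, p i ≤ N) (hN2 : 2 * k + 2 ≤ N) : AdmissibleTuple (auxH p N) := by
  intro ℓ hℓ
  by_cases hin : ∃ m, p m = ℓ
  · obtain ⟨m, rfl⟩ := hin
    obtain ⟨r, hr1, hr0, hr1', hr2, hrj⟩ := good_avoid hp m
    have hpm5 : 5 ≤ p m := good_five hp m
    refine ⟨r, hr1, ?_⟩
    intro i
    refine Fin.cases ?_ (fun j => ?_) i
    · show (Fin.cons 0 _ : Fin (k + k + 1) → ℕ) 0 % p m ≠ r
      rw [Fin.cons_zero, Nat.zero_mod]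
      omega
    · show (Fin.cons 0 _ : Fin (k + k + 1) → ℕ) j.succ % p m ≠ r
      rw [Fin.cons_succ]
      refine Fin.addCases (fun a => ?_) (fun b => ?_) j
      · rw [Fin.append_left]
        by_cases ham : a = m
        · subst ham
          rw [Nat.add_mod_left, Nat.mod_eq_of_lt (by omega : 1 < p a)]
          omega
        · exact hrj a ham
      · rw [Fin.append_right]
        by_cases hbm : b = m
        · subst hbm
          rw [auxB_mod_self (hp.2.1 b).1 (hp.2.1 b).2]
          omega
        · have hne : p m ≠ p b := fun h => hbm (hp.1.injective h.symm)
          rw [auxB_mod_zero (good_five hp b) (hp.2.1 m).1 (hN1 m) hne]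
          omega
  · push_neg at hin
    by_cases hsmall : ℓ ≤ N
    · refine ⟨1, hℓ.one_lt, ?_⟩
      intro i
      refine Fin.cases ?_ (fun j => ?_) i
      · show (Fin.cons 0 _ : Fin (k + k + 1) → ℕ) 0 % ℓ ≠ 1
        rw [Fin.cons_zero, Nat.zero_mod]
        omega
      · show (Fin.cons 0 _ : Fin (k + k + 1) → ℕ) j.succ % ℓ ≠ 1
        rw [Fin.cons_succ]
        refine Fin.addCases (fun a => ?_) (fun b => ?_) j
        · rw [Fin.append_left]
          intro hmod
          have hd := Nat.dvd_sub_mod (n := ℓ) (p a + 1)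
          rw [hmod] at hd
          simp only [Nat.add_sub_cancel] at hd
          have := (Nat.prime_dvd_prime_iff_eq hℓ (hp.2.1 a).1).mp hd
          exact hin a this.symm
        · rw [Fin.append_right,
            auxB_mod_zero (good_five hp b) hℓ hsmall (fun h => hin b h.symm)]
          omega
    · push_neg at hsmall
      by_contra hcon
      push_neg at hcon
      have hsub : Finset.range ℓ ⊆
          Finset.image (fun i => auxH p N i % ℓ) Finset.univ := by
        intro r hr
        rw [Finset.mem_range] at hr
        obtain ⟨i, hi⟩ := hcon r hr
        exact Finset.mem_image.mpr ⟨i, Finset.mem_univ i, hi⟩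
      have hc1 := Finset.card_le_card hsub
      have hc2 := Finset.card_image_le
        (s := (Finset.univ : Finset (Fin (k + k + 1))))
        (f := fun i => auxH p N i % ℓ)
      rw [Finset.card_range] at hc1
      rw [Finset.card_univ, Fintype.card_fin] at hc2
      omega

/-- Key existence step: a new prime `n` compatible with the tuple. -/
lemma good_key {k : ℕ} {p : Fin k → ℕ} (hDHL : DicksonHardyLittlewood)
    (hk : 1 ≤ k) (hp : GoodTuple p) :
    ∃ n : ℕ, n.Prime ∧ (∀ i, p i < n) ∧
      (∀ i, Nat.Prime (n + (p i + 1))) ∧ (∀ i, ¬ p i ∣ n + 2) := by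
  have h5 : ∀ i, 5 ≤ p i := good_five hp
  set L : Fin k := ⟨k - 1, by omega⟩ with hL
  have hmax : ∀ i, p i ≤ p L := by
    intro i
    apply hp.1.monotone
    rw [Fin.le_def]
    have := i.isLt
    simp only [hL]
    omega
  set N := p L + 2 * k + 2 with hN
  have hadm := auxH_adm hp N (fun i => by have := hmax i; omega) (by omega)
  have hPP := hDHL _ _ hadm
  obtain ⟨n, hnS, hn⟩ := hPP.exists_gt (p L)
  have hnS' : ∀ i, Nat.Prime (n + auxH p N i) := hnS
  have hnprime : n.Prime := by
    have := hnS' 0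
    simpa [auxH] using this
  have hApr : ∀ i : Fin k, Nat.Prime (n + (p i + 1)) := by
    intro i
    have := hnS' ((Fin.castAdd k i).succ)
    rwa [auxH, Fin.cons_succ, Fin.append_left] at this
  have hBpr : ∀ i : Fin k, Nat.Prime (n + auxB N (p i)) := by
    intro i
    have := hnS' ((Fin.natAdd k i).succ)
    rwa [auxH, Fin.cons_succ, Fin.append_right] at this
  refine ⟨n, hnprime, fun i => lt_of_le_of_lt (hmax i) hn, hApr, fun i hdvd => ?_⟩
  have hB2 := auxB_pos (N := N) (x := p i)
  have hmod := auxB_mod_self (N := N) (hp.2.1 i).1 (hp.2.1 i).2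
  have hd2 := Nat.dvd_sub_mod (n := p i) (auxB N (p i))
  rw [hmod] at hd2
  have hdd : p i ∣ n + auxB N (p i) := by
    have heq : n + auxB N (p i) = (n + 2) + (auxB N (p i) - 2) := by omega
    rw [heq]
    exact dvd_add hdvd hd2
  have := (Nat.prime_dvd_prime_iff_eq (hp.2.1 i).1 (hBpr i)).mp hdd
  have hlt := lt_of_le_of_lt (hmax i) hn
  omega

/-- Assuming Dickson–Hardy–Littlewood, any good `k`-tuple can be extended to a good
`(k+1)`-tuple by appending an element larger than the last one. -/
theorem goodTuple_extension (hDHL : DicksonHardyLittlewood) (k : ℕ) (hk : 1 ≤ k)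
    (p : Fin k → ℕ) (hp : GoodTuple p) :
    ∃ q : ℕ, p ⟨k - 1, by omega⟩ < q ∧ GoodTuple (Fin.snoc p q) := by
  obtain ⟨n, hnprime, hngt, hApr, hBnd⟩ := good_key hDHL hk hp
  refine ⟨n, hngt _, ?_, ?_, ?_⟩
  · -- StrictMono
    intro a b
    refine Fin.lastCases ?_ (fun b' => ?_) b <;> intro hab
    · have ha : a ≠ Fin.last k := Fin.ne_last_of_lt hab
      obtain ⟨a', rfl⟩ := Fin.exists_castSucc_eq.mpr ha
      rw [Fin.snoc_castSucc, Fin.snoc_last]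
      exact hngt a'
    · have ha : a ≠ Fin.last k := by
        rintro rfl
        exact absurd (lt_of_lt_of_le hab (Fin.le_last _)) (lt_irrefl _)
      obtain ⟨a', rfl⟩ := Fin.exists_castSucc_eq.mpr ha
      rw [Fin.snoc_castSucc, Fin.snoc_castSucc]
      exact hp.1 (Fin.castSucc_lt_castSucc_iff.mp hab)
  · -- primality and size
    intro i
    refine Fin.lastCases ?_ (fun i' => ?_) i
    · rw [Fin.snoc_last]
      have := hngt ⟨0, by omega⟩
      have := good_five hp ⟨0, by omega⟩
      exact ⟨hnprime, by omega⟩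
    · rw [Fin.snoc_castSucc]
      exact hp.2.1 i'
  · -- pair conditions
    intro i j
    refine Fin.lastCases ?_ (fun j' => ?_) j <;> intro hij
    · have hi : i ≠ Fin.last k := Fin.ne_last_of_lt hij
      obtain ⟨i', rfl⟩ := Fin.exists_castSucc_eq.mpr hi
      rw [Fin.snoc_castSucc, Fin.snoc_last]
      constructor
      · have := hApr i'
        rwa [show n + (p i' + 1) = p i' + n + 1 by ring] at this
      · exact hBnd i'
    · have hi : i ≠ Fin.last k := by
        rintro rfl
        exact absurd (lt_of_lt_of_le hij (Fin.le_last _)) (lt_irrefl _)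
      obtain ⟨i', rfl⟩ := Fin.exists_castSucc_eq.mpr hi
      rw [Fin.snoc_castSucc, Fin.snoc_castSucc]
      exact hp.2.2 i' j' (Fin.castSucc_lt_castSucc_iff.mp hij)
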